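/- Let ω be a primitive k-th root of unity in C and set λ_l = (1+ω^l)^k - 1 for 0 ≤ l ≤ k-1 (the eigenvalues of the Wendt circulant matrix W_k). Then λ_l = 0 for some l if and only if 6 divides k; consequently the rank of W_k over Q is k if k is not divisible by 6 and k-2 if 6 divides k. -/

import Mathlib

open Matrix Finset Submodule Module

theorem li_map {K L : Type*} [Field K] [Field L] (f : K →+* L) {n ι : Type*} [Fintype n] [Fintype ι]
    (v : ι → n → K) (hv : LinearIndependent K v) :
    LinearIndependent L (fun i => f ∘ v i) := by
  classical
  set M : Matrix ι n K := Matrix.of v with hM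
  have hinj : Function.Injective M.vecMul := Matrix.vecMul_injective_iff.2 hv
  have hker : LinearMap.ker M.vecMulLinear = ⊥ := by
    rw [LinearMap.ker_eq_bot]; simpa [Matrix.coe_vecMulLinear] using hinj
  obtain ⟨g, hg⟩ := LinearMap.exists_leftInverse_of_injective M.vecMulLinear hker
  set N : Matrix n ι K := (LinearMap.toMatrix' g)ᵀ with hN
  have hgN : Matrix.vecMulLinear N = g := by
    apply LinearMap.ext; intro x
    rw [Matrix.vecMulLinear_apply, Matrix.vecMul_transpose]
    rw [← Matrix.toLin'_apply, Matrix.toLin'_toMatrix']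

  have hMN : M * N = 1 := by
    have h1 : ∀ x : ι → K, x ᵥ* (M * N) = x := by
      intro x
      have := LinearMap.congr_fun hg x
      simpa [Matrix.vecMulLinear_apply, ← hgN, Matrix.vecMul_vecMul] using this
    have h2 : Matrix.toLin' (M * N)ᵀ = LinearMap.id := by
      apply LinearMap.ext; intro x
      simpa [Matrix.toLin'_apply, ← Matrix.vecMul_transpose] using h1 x
    have h3 := congrArg LinearMap.toMatrix' h2
    rw [LinearMap.toMatrix'_toLin', LinearMap.toMatrix'_id] at h3
    calc M * N = ((M*N)ᵀ)ᵀ := (transpose_transpose _).symm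
    _ = 1 := by rw [h3, transpose_one]
  have hMN' : (M.map f) * (N.map f) = 1 := by
    rw [← Matrix.map_mul, hMN, Matrix.map_one f f.map_zero f.map_one]
  have hinj' : Function.Injective (M.map f).vecMul := by
    intro x y hxy
    have := congrArg (· ᵥ* (N.map f)) hxy
    simpa [Matrix.vecMul_vecMul, hMN'] using this
  exact Matrix.vecMul_injective_iff.1 hinj'


theorem rank_map_eq' {K L : Type*} [Field K] [Field L] (f : K →+* L) {m n : Type*} [Fintype m]
    [Fintype n] (M : Matrix m n K) : (M.map f).rank = M.rank := by
  classical
  let φ : (n → K) →ₛₗ[f] (n → L) :=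
    { toFun := fun x => f ∘ x
      map_add' := by intro x y; ext j; simp
      map_smul' := by intro c x; ext j; simp }
  obtain ⟨t, hts, hsp, hli⟩ := exists_linearIndependent K (Set.range M)
  have htfin : t.Finite := (Set.finite_range M).subset hts
  haveI := htfin.fintype
  have hcard : M.rank = t.toFinset.card := by
    rw [Matrix.rank_eq_finrank_span_row, Matrix.row, ← hsp, finrank_span_set_eq_card hli]
  have hrows : ∀ i, (M.map f) i = φ (M i) := fun i => rfl
  have hrange : Set.range (M.map f) = φ '' (Set.range M) := by
    ext x; constructor
    · rintro ⟨i, rfl⟩; exact ⟨M i, ⟨i, rfl⟩, (hrows i).symm⟩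
    · rintro ⟨y, ⟨i, rfl⟩, rfl⟩; exact ⟨i, hrows i⟩
  have key : ∀ (s : Set (n → K)) (x), x ∈ span K s → φ x ∈ span L (φ '' s) := by
    intro s x hx
    induction hx using Submodule.span_induction with
    | mem y hy => exact subset_span (Set.mem_image_of_mem _ hy)
    | zero => rw [map_zero]; exact zero_mem _
    | add y z _ _ hy hz => rw [map_add]; exact add_mem hy hz
    | smul c y _ hy => rw [LinearMap.map_smulₛₗ]; exact smul_mem _ _ hy
  have hspan : span L (Set.range (M.map f)) = span L (φ '' t) := by
    apply le_antisymm
    · rw [span_le]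
      rintro x ⟨i, rfl⟩
      rw [hrows i]
      exact key t (M i) (hsp ▸ subset_span ⟨i, rfl⟩)
    · rw [span_le]
      rintro x ⟨y, hy, rfl⟩
      exact subset_span (hrange ▸ Set.mem_image_of_mem _ (hts hy))
  have h1 : (M.map f).rank ≤ M.rank := by
    rw [Matrix.rank_eq_finrank_span_row, Matrix.row, hspan, hcard]
    have himg : φ '' t = Set.range (fun x : t => φ (x : n → K)) := by
      rw [← Set.image_eq_range]
    rw [himg]
    refine (finrank_range_le_card _).trans ?_
    simp [Set.toFinset_card]
  have hli' : LinearIndependent L (fun x : t => φ (x : n → K)) :=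
    li_map f (fun x : t => (x : n → K)) hli
  have h2 : M.rank ≤ (M.map f).rank := by
    rw [hcard, Matrix.rank_eq_finrank_span_row, Matrix.row]
    have hmem : ∀ x : t, φ (x : n → K) ∈ span L (Set.range (M.map f)) := by
      intro x
      have : φ (x : n → K) ∈ span L (φ '' t) := subset_span (Set.mem_image_of_mem _ x.2)
      rwa [← hspan] at this
    let v' : t → span L (Set.range (M.map f)) := fun x => ⟨φ x, hmem x⟩
    have hv' : LinearIndependent L v' := by
      apply LinearIndependent.of_comp (span L (Set.range (M.map f))).subtype
      exact hli'
    have := hv'.fintype_card_le_finrank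
    simpa [Set.toFinset_card] using this
  exact le_antisymm h1 h2


lemma key1 {k : ℕ} (hk : 0 < k) {z : ℂ} (hz : z ^ k = 1) (h : (1 + z) ^ k = 1) :
    z ^ 2 + z + 1 = 0 := by
  have hn1 : ‖z‖ = 1 := Complex.norm_eq_one_of_pow_eq_one hz hk.ne'
  have hn2 : ‖1 + z‖ = 1 := Complex.norm_eq_one_of_pow_eq_one h hk.ne'
  have hsq : ∀ w : ℂ, ‖w‖ = 1 → w * (starRingEnd ℂ) w = 1 := by
    intro w hw
    rw [Complex.mul_conj]
    have : Complex.normSq w = 1 := by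
      rw [Complex.normSq_eq_norm_sq, hw, one_pow]
    rw [this]; norm_num
  have e1 := hsq z hn1
  have e2 := hsq (1 + z) hn2
  rw [map_add, _root_.map_one] at e2
  have hw : (starRingEnd ℂ) z = -1 - z := by linear_combination e2 - e1
  linear_combination (-1 : ℂ) * e1 + z * hw

lemma key2 {k : ℕ} (h6 : 6 ∣ k) {z : ℂ} (hq : z ^ 2 + z + 1 = 0) : (1 + z) ^ k = 1 := by
  have h3 : z ^ 3 = 1 := by linear_combination (z - 1) * hq
  have e : 1 + z = -z ^ 2 := by linear_combination hq
  have h6z : (1 + z) ^ 6 = 1 := by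
    have : (1 + z) ^ 6 = (z ^ 3) ^ 4 := by rw [e]; ring
    rw [this, h3, one_pow]
  obtain ⟨t, rfl⟩ := h6
  rw [pow_mul, h6z, one_pow]

lemma key3 {k : ℕ} (hk : 0 < k) {z : ℂ} (hz : z ^ k = 1) (h : (1 + z) ^ k = 1) : 6 ∣ k := by
  have hq := key1 hk hz h
  have hzne : z ≠ 1 := by
    rintro rfl
    norm_num at hq
  have h3 : z ^ 3 = 1 := by linear_combination (z - 1) * hq
  have h3k : 3 ∣ k := by
    by_contra hnd
    have hg : z ^ Nat.gcd 3 k = 1 := pow_gcd_eq_one.2 ⟨h3, hz⟩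
    have hc : Nat.gcd 3 k = 1 := (Nat.Prime.coprime_iff_not_dvd (by norm_num)).2 hnd
    rw [hc, pow_one] at hg
    exact hzne hg
  have h2k : 2 ∣ k := by
    have e : 1 + z = -z ^ 2 := by linear_combination hq
    have : ((-1 : ℂ)) ^ k = 1 := by
      have : (1 + z) ^ k = (-1) ^ k * (z ^ k) ^ 2 := by rw [e]; ring
      rw [h, hz, one_pow, mul_one] at this
      exact this.symm
    rcases Nat.even_or_odd k with he | ho
    · exact he.two_dvd
    · rw [ho.neg_one_pow] at this
      norm_num at this
  exact Nat.Coprime.mul_dvd_of_dvd_of_dvd (by norm_num) h2k h3k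

lemma quad_of_cube {z : ℂ} (h3 : z ^ 3 = 1) (hz : z ≠ 1) : z ^ 2 + z + 1 = 0 := by
  have : (z - 1) * (z ^ 2 + z + 1) = 0 := by linear_combination h3
  rcases mul_eq_zero.1 this with h | h
  · exact absurd (by linear_combination h) hz
  · exact h

lemma part1 {k : ℕ} (hk : 0 < k) {ω : ℂ} (hω : IsPrimitiveRoot ω k) :
    (∃ l < k, (1 + ω ^ l) ^ k - 1 = 0) ↔ 6 ∣ k := by
  constructor
  · rintro ⟨l, hl, hL⟩
    have hz : (ω ^ l) ^ k = 1 := by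
      rw [← pow_mul, mul_comm, pow_mul, hω.pow_eq_one, one_pow]
    exact key3 hk hz (sub_eq_zero.1 hL)
  · intro h6
    have h3k : 3 ∣ k := dvd_trans (by norm_num) h6
    have hk6 : 6 ≤ k := Nat.le_of_dvd hk h6
    refine ⟨k / 3, Nat.div_lt_self hk (by norm_num), ?_⟩
    have hpos : 0 < k / 3 := Nat.div_pos (by omega) (by norm_num)
    have h3 : (ω ^ (k / 3)) ^ 3 = 1 := by
      rw [← pow_mul, Nat.div_mul_cancel h3k, hω.pow_eq_one]
    have hne : ω ^ (k / 3) ≠ 1 :=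
      hω.pow_ne_one_of_pos_of_lt hpos.ne' (Nat.div_lt_self hk (by norm_num))
    rw [sub_eq_zero]
    exact key2 h6 (quad_of_cube h3 hne)

lemma count_zeros {k : ℕ} (hk : 0 < k) {μ : ℂ} (hμ : IsPrimitiveRoot μ k) :
    (univ.filter (fun l : Fin k => (1 + μ ^ (l : ℕ)) ^ k - 1 = 0)).card =
      if 6 ∣ k then 2 else 0 := by
  have hzk : ∀ l : ℕ, (μ ^ l) ^ k = 1 := by
    intro l; rw [← pow_mul, mul_comm, pow_mul, hμ.pow_eq_one, one_pow]
  split_ifs with h6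
  · have h3k : 3 ∣ k := dvd_trans (by norm_num) h6
    have hk6 : 6 ≤ k := Nat.le_of_dvd hk h6
    obtain ⟨m, hmk⟩ : ∃ m, k = 3 * m := h3k
    have hmpos : 0 < m := by omega
    have ha : m < k := by omega
    have hb : 2 * m < k := by omega
    have hmem : ∀ l : Fin k, ((1 + μ ^ (l : ℕ)) ^ k - 1 = 0) ↔ (l = ⟨m, ha⟩ ∨ l = ⟨2 * m, hb⟩) := by
      intro l
      constructor
      · intro hl
        have hq := key1 hk (hzk l) (sub_eq_zero.1 hl)
        have h3 : μ ^ (3 * (l : ℕ)) = 1 := by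
          rw [mul_comm, pow_mul]; linear_combination (μ ^ (l : ℕ) - 1) * hq
        have hdvd : k ∣ 3 * (l : ℕ) := (hμ.pow_eq_one_iff_dvd _).1 h3
        obtain ⟨c, hc⟩ := hdvd
        have hp : (l : ℕ) = m * c := by
          have : 3 * (l : ℕ) = 3 * (m * c) := by rw [hc, hmk]; ring
          omega
        have hlk : (l : ℕ) < k := l.isLt
        have hc3 : c < 3 := by
          by_contra hcon
          push_neg at hcon
          have : m * 3 ≤ (l : ℕ) := hp ▸ Nat.mul_le_mul_left m hcon
          omega
        have hc0 : c ≠ 0 := by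
          rintro rfl
          rw [mul_zero] at hp
          have h1 : μ ^ (l : ℕ) = 1 := by rw [hp, pow_zero]
          rw [h1] at hq; norm_num at hq
        have hc12 : c = 1 ∨ c = 2 := by omega
        rcases hc12 with rfl | rfl
        · left; exact Fin.ext (show (l : ℕ) = m by omega)
        · right; exact Fin.ext (show (l : ℕ) = 2 * m by omega)
      · rintro (rfl | rfl) <;> rw [sub_eq_zero]
        · refine key2 h6 (quad_of_cube ?_ (hμ.pow_ne_one_of_pos_of_lt hmpos.ne' ha))
          show (μ ^ m) ^ 3 = 1
          rw [← pow_mul, show m * 3 = k from by omega, hμ.pow_eq_one]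
        · refine key2 h6 (quad_of_cube ?_ (hμ.pow_ne_one_of_pos_of_lt (show 2 * m ≠ 0 by omega) hb))
          show (μ ^ (2 * m)) ^ 3 = 1
          rw [← pow_mul, show 2 * m * 3 = k * 2 from by omega, pow_mul, hμ.pow_eq_one, one_pow]
    have : (univ.filter (fun l : Fin k => (1 + μ ^ (l : ℕ)) ^ k - 1 = 0)) =
        {(⟨m, ha⟩ : Fin k), ⟨2 * m, hb⟩} := by
      ext l; simp [hmem l]
    rw [this]
    exact Finset.card_pair (by simp [Fin.ext_iff]; omega)
  · have : (univ.filter (fun l : Fin k => (1 + μ ^ (l : ℕ)) ^ k - 1 = 0)) = ∅ := by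
      ext l
      simp only [mem_filter, mem_univ, true_and, notMem_empty, iff_false]
      intro hl
      exact h6 (key3 hk (hzk l) (sub_eq_zero.1 hl))
    rw [this, card_empty]


lemma binom_sum {k : ℕ} (hk : 0 < k) {z : ℂ} (hz : z ^ k = 1) :
    ∑ m : Fin k, ((k.choose m.val : ℚ) : ℂ) * z ^ (m.val) = (1 + z) ^ k - 1 := by
  rw [Fin.sum_univ_eq_sum_range (fun m => ((k.choose m : ℚ) : ℂ) * z ^ m)]
  have h := add_pow z 1 k
  rw [Finset.sum_range_succ] at h
  simp only [one_pow, mul_one, Nat.choose_self, Nat.cast_one] at h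
  rw [hz] at h
  have : (1 : ℂ) + z = z + 1 := by ring
  rw [this, h, add_sub_cancel_right]
  push_cast
  exact Finset.sum_congr rfl fun x _ => mul_comm _ _

lemma pow_congr {k : ℕ} {ω : ℂ} (hω : IsPrimitiveRoot ω k) {a b : ℕ} (hab : a ≡ b [MOD k]) :
    ω ^ a = ω ^ b := by
  have h : ∀ n, ω ^ n = ω ^ (n % k) := by
    intro n
    conv_lhs => rw [← Nat.div_add_mod n k]
    rw [pow_add, pow_mul, hω.pow_eq_one, one_pow, one_mul]
  rw [h a, h b, hab]

lemma main_identity {k : ℕ} (hk : 0 < k) {ω : ℂ} (hω : IsPrimitiveRoot ω k) :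
    (Matrix.circulant (fun i : Fin k => ((k.choose i.val : ℚ) : ℂ))) *
      (Matrix.of fun i j : Fin k => ω ^ (i.val * j.val)) =
    (Matrix.of fun i j : Fin k => ω ^ (i.val * j.val)) *
      (Matrix.diagonal (fun l : Fin k => (1 + (ω⁻¹) ^ (l : ℕ)) ^ k - 1)) := by
  haveI : NeZero k := ⟨hk.ne'⟩
  have hωne : ω ≠ 0 := hω.ne_zero hk.ne'
  ext i l
  rw [Matrix.mul_apply, Matrix.mul_diagonal]
  have hre : ∑ j : Fin k, Matrix.circulant (fun i : Fin k => ((k.choose i.val : ℚ) : ℂ)) i j *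
      (Matrix.of fun i j : Fin k => ω ^ (i.val * j.val)) j l
      = ∑ m : Fin k, ((k.choose m.val : ℚ) : ℂ) * ω ^ ((i - m).val * l.val) := by
    apply Fintype.sum_equiv (Equiv.subLeft i)
    intro j
    simp only [Matrix.circulant_apply, Matrix.of_apply, Equiv.subLeft_apply]
    rw [sub_sub_cancel]
  rw [hre]
  have hpt : ∀ m : Fin k, ω ^ ((i - m).val * l.val)
      = ((ω⁻¹) ^ (l : ℕ)) ^ (m.val) * ω ^ (i.val * l.val) := by
    intro m
    have hmod : ((i - m).val + m.val) * l.val ≡ i.val * l.val [MOD k] := by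
      apply Nat.ModEq.mul_right
      have hsub : (i - m).val = (k - m.val + i.val) % k := by
        rw [Fin.sub_def]
      rw [hsub]
      calc (k - m.val + i.val) % k + m.val
          ≡ k - m.val + i.val + m.val [MOD k] := Nat.ModEq.add_right _ (Nat.mod_modEq _ _)
        _ = i.val + k := by have := m.isLt; omega
        _ ≡ i.val + 0 [MOD k] := Nat.ModEq.add_left _ ((Nat.modEq_zero_iff_dvd).2 dvd_rfl)
        _ = i.val := by omega
    have h1 : ω ^ ((i - m).val * l.val) * ω ^ (m.val * l.val) = ω ^ (i.val * l.val) := by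
      rw [← pow_add, ← add_mul]
      exact pow_congr hω hmod
    rw [← pow_mul, mul_comm (l : ℕ) m.val, inv_pow, eq_comm,
      inv_mul_eq_iff_eq_mul₀ (pow_ne_zero _ hωne), ← h1]
    ring
  calc ∑ m : Fin k, ((k.choose m.val : ℚ) : ℂ) * ω ^ ((i - m).val * l.val)
      = ∑ m : Fin k, (((k.choose m.val : ℚ) : ℂ) * ((ω⁻¹) ^ (l : ℕ)) ^ (m.val)) *
          ω ^ (i.val * l.val) := by
        apply Finset.sum_congr rfl
        intro m _
        rw [hpt m]
        ring
    _ = (∑ m : Fin k, ((k.choose m.val : ℚ) : ℂ) * ((ω⁻¹) ^ (l : ℕ)) ^ (m.val)) *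
          ω ^ (i.val * l.val) := by rw [Finset.sum_mul]
    _ = ((1 + (ω⁻¹) ^ (l : ℕ)) ^ k - 1) * ω ^ (i.val * l.val) := by
        have hzk : ((ω⁻¹) ^ (l : ℕ)) ^ k = 1 := by
          rw [← pow_mul, mul_comm, pow_mul, hω.inv.pow_eq_one, one_pow]
        rw [binom_sum hk hzk]
    _ = (Matrix.of fun i j : Fin k => ω ^ (i.val * j.val)) i l *
          ((1 + (ω⁻¹) ^ (l : ℕ)) ^ k - 1) := by
        rw [Matrix.of_apply]; ring


lemma F_isUnit_det {k : ℕ} (hk : 0 < k) {ω : ℂ} (hω : IsPrimitiveRoot ω k) :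
    IsUnit (Matrix.of fun i j : Fin k => ω ^ (i.val * j.val)).det := by
  have hv : (Matrix.of fun i j : Fin k => ω ^ (i.val * j.val)) =
      Matrix.vandermonde (fun i : Fin k => ω ^ (i : ℕ)) := by
    ext i j
    rw [Matrix.vandermonde, Matrix.of_apply, Matrix.of_apply, ← pow_mul]
  rw [hv, Matrix.det_vandermonde, isUnit_iff_ne_zero]
  rw [Finset.prod_ne_zero_iff]
  intro i _
  rw [Finset.prod_ne_zero_iff]
  intro j hj
  rw [Finset.mem_Ioi] at hj
  rw [sub_ne_zero]
  intro heq
  exact absurd (hω.pow_inj j.isLt i.isLt heq) (by omega)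

lemma rank_circulant_complex {k : ℕ} (hk : 0 < k) {ω : ℂ} (hω : IsPrimitiveRoot ω k) :
    (Matrix.circulant (fun i : Fin k => ((k.choose i.val : ℚ) : ℂ))).rank =
      k - (univ.filter (fun l : Fin k => (1 + (ω⁻¹) ^ (l : ℕ)) ^ k - 1 = 0)).card := by
  classical
  have hFu := F_isUnit_det hk hω
  have h1 : (Matrix.circulant (fun i : Fin k => ((k.choose i.val : ℚ) : ℂ))).rank
      = (Matrix.diagonal (fun l : Fin k => (1 + (ω⁻¹) ^ (l : ℕ)) ^ k - 1)).rank := by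
    rw [← Matrix.rank_mul_eq_left_of_isUnit_det (Matrix.of fun i j : Fin k => ω ^ (i.val * j.val))
      _ hFu, main_identity hk hω,
      Matrix.rank_mul_eq_right_of_isUnit_det (Matrix.of fun i j : Fin k => ω ^ (i.val * j.val))
      _ hFu]
  rw [h1, Matrix.rank_diagonal, Fintype.card_subtype]
  simp only [ne_eq]
  have h3 := Finset.card_filter_add_card_filter_not
    (s := (univ : Finset (Fin k))) (p := fun l : Fin k => (1 + (ω⁻¹) ^ (l : ℕ)) ^ k - 1 = 0)
  simp only [Finset.card_univ, Fintype.card_fin] at h3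
  omega


theorem stmt6 (k : ℕ) (hk : 0 < k) (ω : ℂ) (hω : IsPrimitiveRoot ω k) :
    ((∃ l < k, (1 + ω ^ l) ^ k - 1 = 0) ↔ 6 ∣ k) ∧
    (Matrix.circulant (fun i : Fin k => (k.choose i.val : ℚ))).rank =
      if 6 ∣ k then k - 2 else k := by
  constructor
  · exact part1 hk hω
  · have hμ : IsPrimitiveRoot (ω⁻¹) k := hω.inv
    have hmap : (Matrix.circulant (fun i : Fin k => (k.choose i.val : ℚ))).map
        (algebraMap ℚ ℂ) = Matrix.circulant (fun i : Fin k => ((k.choose i.val : ℚ) : ℂ)) := by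
      ext i j
      simp only [Matrix.map_apply, Matrix.circulant_apply]
      exact eq_ratCast (algebraMap ℚ ℂ) _
    have htrans := rank_map_eq' (algebraMap ℚ ℂ)
      (Matrix.circulant (fun i : Fin k => (k.choose i.val : ℚ)))
    rw [hmap, rank_circulant_complex hk hω] at htrans
    rw [← htrans, count_zeros hk hμ]
    split_ifs with h6
    · rfl
    · omega
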